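/- Let E and F be vector spaces over ℂ, n₀ a positive integer, and I : E → F an additive map (I(x+y) = I(x) + I(y) for all x, y ∈ E) such that I(λx) = conj(λ)·I(x) for all x ∈ E and all λ ∈ T¹_{1/n₀}. Then I(λx) = conj(λ)·I(x) for all x ∈ E and all λ ∈ ℂ; in particular I is conjugate ℂ-linear. -/

import Mathlib

open Filter Topology

/-- The arc `T¹_{1/n₀} = {e^{iθ} : 0 ≤ θ ≤ 1/n₀}` of the unit circle. -/
def unitArc (n₀ : ℕ) : Set ℂ :=
  {l : ℂ | ∃ θ : ℝ, 0 ≤ θ ∧ θ ≤ 1 / (n₀ : ℝ) ∧ l = Complex.exp (θ * Complex.I)}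

theorem conj_linear_extension {E F : Type*} [AddCommGroup E] [Module ℂ E]
    [AddCommGroup F] [Module ℂ F]
    (n₀ : ℕ) (hn₀ : 0 < n₀) (I : E → F)
    (hadd : ∀ x y : E, I (x + y) = I x + I y)
    (harc : ∀ x : E, ∀ l ∈ unitArc n₀, I (l • x) = (starRingEnd ℂ) l • I x) :
    ∀ (x : E) (l : ℂ), I (l • x) = (starRingEnd ℂ) l • I x := by
  have hn₀' : (0:ℝ) < (n₀ : ℝ) := by exact_mod_cast hn₀
  -- Step 1: homogeneity for exp(θ I) with 0 ≤ θ ≤ m / n₀, by induction on m.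
  have step : ∀ m : ℕ, ∀ θ : ℝ, 0 ≤ θ → θ ≤ m / n₀ →
      ∀ x : E, I (Complex.exp (θ * Complex.I) • x)
        = (starRingEnd ℂ) (Complex.exp (θ * Complex.I)) • I x := by
    intro m
    induction m with
    | zero =>
      intro θ h0 h1 x
      have : θ = 0 := le_antisymm (by simpa using h1) h0
      subst this
      simp
    | succ m ih =>
      intro θ h0 h1 x
      by_cases hc : θ ≤ 1 / n₀
      · exact harc x _ ⟨θ, h0, hc, rfl⟩
      · push_neg at hc
        set θ' := θ - 1 / n₀ with hθ'
        have h0' : 0 ≤ θ' := by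
          have : (0:ℝ) < 1 / n₀ := by positivity
          simp only [hθ', sub_nonneg]
          exact le_of_lt hc
        have h1' : θ' ≤ m / n₀ := by
          have h : θ ≤ (m + 1) / n₀ := by push_cast at h1 ⊢; linarith
          rw [add_div] at h
          rw [hθ']; linarith
        have key : Complex.exp (θ * Complex.I)
            = Complex.exp ((1 / n₀ : ℝ) * Complex.I) * Complex.exp (θ' * Complex.I) := by
          rw [← Complex.exp_add]
          congr 1
          push_cast [hθ']
          ring
        rw [key, mul_smul, harc _ _ ⟨1 / n₀, by positivity, le_refl _, rfl⟩,
          ih θ' h0' h1', map_mul, mul_smul]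
  -- Step 2: homogeneity for exp(θ I), all real θ.
  have hexp : ∀ θ : ℝ, ∀ x : E, I (Complex.exp (θ * Complex.I) • x)
      = (starRingEnd ℂ) (Complex.exp (θ * Complex.I)) • I x := by
    have hpos : ∀ θ : ℝ, 0 ≤ θ → ∀ x : E, I (Complex.exp (θ * Complex.I) • x)
        = (starRingEnd ℂ) (Complex.exp (θ * Complex.I)) • I x := by
      intro θ h0 x
      refine step ⌈θ * n₀⌉₊ θ h0 ?_ x
      rw [le_div_iff₀ hn₀']
      exact Nat.le_ceil _
    intro θ x
    obtain ⟨k, hk⟩ : ∃ k : ℕ, 0 ≤ θ + 2 * Real.pi * k := by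
      refine ⟨⌈-θ⌉₊, ?_⟩
      have h1 : -θ ≤ ⌈-θ⌉₊ := Nat.le_ceil _
      have h2 : (⌈-θ⌉₊ : ℝ) ≤ 2 * Real.pi * ⌈-θ⌉₊ := by
        nlinarith [Real.pi_gt_three, Nat.cast_nonneg (α := ℝ) ⌈-θ⌉₊]
      linarith
    have hper : Complex.exp ((θ + 2 * Real.pi * k : ℝ) * Complex.I)
        = Complex.exp (θ * Complex.I) := by
      have h : ((θ + 2 * Real.pi * k : ℝ) : ℂ) * Complex.I
          = (θ : ℂ) * Complex.I + ((k : ℤ) : ℂ) * (2 * (Real.pi : ℂ) * Complex.I) := by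
        push_cast; ring
      rw [h, Complex.exp_add, Complex.exp_int_mul_two_pi_mul_I, mul_one]
    have := hpos (θ + 2 * Real.pi * k) hk x
    rwa [hper] at this
  -- Step 3: homogeneity for unit complex numbers.
  have hcirc : ∀ z : ℂ, ‖z‖ = 1 → ∀ x : E,
      I (z • x) = (starRingEnd ℂ) z • I x := by
    intro z hz x
    have h := Complex.norm_mul_exp_arg_mul_I z
    rw [hz, Complex.ofReal_one, one_mul] at h
    rw [← h]
    exact hexp _ x
  -- Step 4: homogeneity for natural numbers.
  have hI0 : I 0 = 0 := by
    have h := hadd 0 0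
    rw [add_zero] at h
    exact (right_eq_add.mp h)
  have hnat : ∀ n : ℕ, ∀ x : E, I ((n : ℂ) • x) = (n : ℂ) • I x := by
    intro n
    induction n with
    | zero => intro x; simp [hI0]
    | succ n ih =>
      intro x
      have : ((n + 1 : ℕ) : ℂ) • x = (n : ℂ) • x + x := by
        push_cast
        rw [add_smul, one_smul]
      rw [this, hadd, ih]
      push_cast
      rw [add_smul, one_smul]
  -- Step 5: homogeneity for real numbers (midpoint trick).
  have hreal : ∀ α : ℝ, ∀ x : E, I ((α : ℂ) • x) = (α : ℂ) • I x := by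
    intro α x
    set β := α / 2 with hβ
    set n : ℕ := ⌈|β|⌉₊ + 1 with hn
    have hnpos : (0:ℝ) < (n : ℝ) := by positivity
    set t : ℝ := β / n with ht
    have htabs : |t| ≤ 1 := by
      rw [ht, abs_div, abs_of_pos hnpos, div_le_one hnpos]
      calc |β| ≤ ⌈|β|⌉₊ := Nat.le_ceil _
        _ ≤ (n:ℝ) := by rw [hn]; push_cast; linarith
    have ht2 : 0 ≤ 1 - t ^ 2 := by nlinarith [abs_nonneg t, sq_abs t]
    set s : ℝ := Real.sqrt (1 - t ^ 2) with hs
    set z : ℂ := (t : ℂ) + (s : ℂ) * Complex.I with hz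
    have habs : ‖z‖ = 1 := by
      have h1 : Complex.normSq z = 1 := by
        rw [hz, Complex.normSq_add_mul_I]
        have : s ^ 2 = 1 - t ^ 2 := Real.sq_sqrt ht2
        nlinarith
      have h2 : ‖z‖ ^ 2 = 1 := by
        rw [← Complex.sq_norm] at h1; exact h1
      nlinarith [norm_nonneg z]
    have habs' : ‖(starRingEnd ℂ) z‖ = 1 := by
      rw [Complex.norm_conj]; exact habs
    have hsum : (n : ℂ) * z + (n : ℂ) * (starRingEnd ℂ) z = (α : ℂ) := by
      rw [mul_comm ((n:ℂ)) z, mul_comm ((n:ℂ)) _, ← add_mul, Complex.add_conj]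
      have hre : z.re = t := by simp [hz]
      rw [hre]
      push_cast
      rw [ht, hβ]
      have hn0 : (n:ℂ) ≠ 0 := by exact_mod_cast hnpos.ne'
      field_simp
      push_cast
      ring_nf
      simp [hn0]
    have expand : (α : ℂ) • x = (n : ℂ) • (z • x) + (n : ℂ) • ((starRingEnd ℂ) z • x) := by
      rw [smul_smul, smul_smul, ← add_smul, hsum]
    rw [expand, hadd, hnat, hnat, hcirc z habs, hcirc _ habs',
      Complex.conj_conj, smul_smul, smul_smul, ← add_smul]
    congr 1
    rw [← hsum]
    ring
  -- Conclusion.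
  intro x l
  have hdecomp : l = (l.re : ℂ) + (l.im : ℂ) * Complex.I := (Complex.re_add_im l).symm
  have hi : I (Complex.I • x) = (starRingEnd ℂ) Complex.I • I x :=
    hcirc Complex.I (by simp) x
  calc I (l • x) = I ((l.re : ℂ) • x + (l.im : ℂ) • (Complex.I • x)) := by
        rw [smul_smul, ← add_smul, ← hdecomp]
    _ = I ((l.re : ℂ) • x) + I ((l.im : ℂ) • (Complex.I • x)) := hadd _ _
    _ = (l.re : ℂ) • I x + (l.im : ℂ) • I (Complex.I • x) := by rw [hreal, hreal]
    _ = (l.re : ℂ) • I x + (l.im : ℂ) • ((starRingEnd ℂ) Complex.I • I x) := by rw [hi]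
    _ = (starRingEnd ℂ) l • I x := by
        rw [smul_smul, ← add_smul]
        congr 1
        rw [Complex.conj_I]
        apply Complex.ext <;> simp
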